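/- Let g be a finite-dimensional Lie algebra over a field k of characteristic 0, and let r ∈ g ⊗ g, viewed as a linear map r : g* → g via r(η) = Σ ⟨η, r⁽¹⁾⟩ r⁽²⁾. Suppose r satisfies the classical Yang–Baxter equation [r₁₂, r₁₃] + [r₁₂, r₂₃] + [r₁₃, r₂₃] = 0. Define a bracket on g* by ⟨[η, η'], ξ⟩ = ⟨η ⊗ η', δξ⟩ where δξ = Σ [ξ, r⁽¹⁾] ⊗ r⁽²⁾ + r⁽¹⁾ ⊗ [ξ, r⁽²⁾]. Then r : g* → g intertwines the brackets up to reversal: r([η', η]) = [r(η'), r(η)] for all η, η' ∈ g*. -/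

import Mathlib

open scoped TensorProduct

section

variable {k : Type*} [Field k] {g : Type*} [LieRing g] [LieAlgebra k g]

/-- The coboundary cobracket `δξ = Σ [ξ, r⁽¹⁾] ⊗ r⁽²⁾ + r⁽¹⁾ ⊗ [ξ, r⁽²⁾]` determined by
`r ∈ g ⊗ g`. -/
noncomputable def cobracket (r : g ⊗[k] g) : g →ₗ[k] g ⊗[k] g :=
  LinearMap.applyₗ r ∘ₗ
    ((LinearMap.rTensorHom g + LinearMap.lTensorHom g :
        (g →ₗ[k] g) →ₗ[k] (g ⊗[k] g →ₗ[k] g ⊗[k] g)) ∘ₗ LieAlgebra.ad k g)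

/-- The bracket on `g*` defined by `⟨[η, η'], ξ⟩ = ⟨η ⊗ η', δξ⟩`. -/
noncomputable def dualBracket (r : g ⊗[k] g) (η η' : Module.Dual k g) :
    Module.Dual k g :=
  TensorProduct.lift (η.smulRight η') ∘ₗ cobracket r

/-- `r ∈ g ⊗ g` viewed as a linear map `g* → g`, `r(η) = Σ ⟨η, r⁽¹⁾⟩ r⁽²⁾`. -/
noncomputable def rAsMap (r : g ⊗[k] g) (η : Module.Dual k g) : g :=
  TensorProduct.lid k g (LinearMap.rTensor g η r)

end

/-- Let `g` be a finite-dimensional Lie algebra over a field of characteristic `0` and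
`r ∈ g ⊗ g` a solution of the classical Yang–Baxter equation
`[r₁₂, r₁₃] + [r₁₂, r₂₃] + [r₁₃, r₂₃] = 0`.  Then `r : g* → g` intertwines the induced
bracket on `g*` up to reversal: `r([η', η]) = [r(η'), r(η)]`. -/
theorem cybe_r_intertwines_brackets
    {k : Type*} [Field k] [CharZero k] {g : Type*} [LieRing g] [LieAlgebra k g]
    [FiniteDimensional k g]
    (r : g ⊗[k] g) {ι : Type*} [Fintype ι] (x y : ι → g)
    (hr : r = ∑ i, x i ⊗ₜ[k] y i)
    (hCYBE : ∑ i, ∑ j,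
        (⁅x i, x j⁆ ⊗ₜ[k] (y i ⊗ₜ[k] y j) +
          x i ⊗ₜ[k] (⁅y i, x j⁆ ⊗ₜ[k] y j) +
          x i ⊗ₜ[k] (x j ⊗ₜ[k] ⁅y i, y j⁆)) = (0 : g ⊗[k] (g ⊗[k] g))) :
    ∀ η η' : Module.Dual k g,
      rAsMap r (dualBracket r η' η) = ⁅rAsMap r η', rAsMap r η⁆ := by
  intro η η'
  subst hr
  have key := congrArg (TensorProduct.lift (η'.smulRight
    (TensorProduct.lift (η.smulRight (LinearMap.id : g →ₗ[k] g))))) hCYBE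
  simp only [map_sum, map_add, map_zero, TensorProduct.lift.tmul, LinearMap.smul_apply,
    LinearMap.smulRight_apply, LinearMap.id_apply, smul_smul] at key
  have key' : (∑ i, ∑ j, (η' ⁅x i, x j⁆ * η (y i)) • y j) +
      ((∑ i, ∑ j, (η' (x i) * η ⁅y i, x j⁆) • y j) +
        ∑ i, ∑ j, (η' (x i) * η (x j)) • ⁅y i, y j⁆) = 0 := by
    rw [← key]
    rw [← Finset.sum_add_distrib, ← Finset.sum_add_distrib]
    refine Finset.sum_congr rfl fun i _ => ?_
    rw [← Finset.sum_add_distrib, ← Finset.sum_add_distrib]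
    refine Finset.sum_congr rfl fun j _ => ?_
    abel
  simp only [rAsMap, dualBracket, cobracket, LinearMap.coe_comp, Function.comp_apply,
    LinearMap.applyₗ_apply_apply, LinearMap.applyₗ', LinearMap.add_apply, LinearMap.coe_rTensorHom,
    LinearMap.coe_lTensorHom, LinearMap.coe_mk, AddHom.coe_mk, AddMonoidHom.coe_mk, ZeroHom.coe_mk,
    LieAlgebra.ad_apply, map_sum, LinearMap.rTensor_tmul,
    LinearMap.lTensor_tmul, TensorProduct.lid_tmul, TensorProduct.lift.tmul,
    LinearMap.smulRight_apply, map_add, LinearMap.sum_apply, LinearMap.smul_apply,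
    LieHom.coe_toLinearMap, lie_smul, smul_lie, smul_smul, add_smul, smul_eq_mul,
    Finset.sum_smul, Finset.smul_sum, Finset.sum_add_distrib]
  have sum_lie' : ∀ (f : ι → g) (b : g), ⁅∑ i, f i, b⁆ = ∑ i, ⁅f i, b⁆ := by
    intro f b
    rw [← lie_skew, ← LieAlgebra.ad_apply (R := k), map_sum, ← Finset.sum_neg_distrib]
    exact Finset.sum_congr rfl fun i _ => by rw [LieAlgebra.ad_apply, lie_skew]
  have hR : ⁅(∑ i, η' (x i) • y i : g), ∑ i, η (x i) • y i⁆
      = ∑ i, ∑ j, (η' (x i) * η (x j)) • ⁅y i, y j⁆ := by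
    rw [sum_lie']
    refine Finset.sum_congr rfl fun i _ => ?_
    rw [smul_lie, ← LieAlgebra.ad_apply (R := k), map_sum, Finset.smul_sum]
    exact Finset.sum_congr rfl fun j _ => by
      rw [map_smul]; simp [LieAlgebra.ad_apply, smul_smul]
  rw [hR]
  have e1 : (∑ j, ∑ i, (η' ⁅x j, x i⁆ * η (y i)) • y j)
      = -∑ i, ∑ j, (η' ⁅x i, x j⁆ * η (y i)) • y j := by
    rw [Finset.sum_comm, ← Finset.sum_neg_distrib]
    refine Finset.sum_congr rfl fun i _ => ?_
    rw [← Finset.sum_neg_distrib]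
    refine Finset.sum_congr rfl fun j _ => ?_
    rw [← lie_skew (x j) (x i), map_neg, neg_mul, neg_smul]
  have e2 : (∑ j, ∑ i, (η' (x i) * η ⁅x j, y i⁆) • y j)
      = -∑ i, ∑ j, (η' (x i) * η ⁅y i, x j⁆) • y j := by
    rw [Finset.sum_comm, ← Finset.sum_neg_distrib]
    refine Finset.sum_congr rfl fun i _ => ?_
    rw [← Finset.sum_neg_distrib]
    refine Finset.sum_congr rfl fun j _ => ?_
    rw [← lie_skew (x j) (y i), map_neg, mul_neg, neg_smul]
  rw [e1, e2, ← neg_add, neg_eq_iff_add_eq_zero, add_assoc]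
  exact key'
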